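/- arXiv:math/0608431 — 2 statements merged into one kernel-verified Lean document; each statement's English description precedes it below -/
import Mathlib

section
/- Every calibrated sub-action u for a θ-Hölder potential A satisfies the representation formula u(x̄) = inf over x ∈ Ω(A) of [u(x) + S_A(x,x̄)], for all x̄ ∈ Σ. -/
open MeasureTheory

section AubryMather

variable {r : ℕ} {M : Fin r → Fin r → Bool}

/-- One-sided subshift of finite type on `r` symbols with transition matrix `M`. -/
abbrev SigSp (r : ℕ) (M : Fin r → Fin r → Bool) :=
  {x : ℕ → Fin r // ∀ j, M (x j) (x (j + 1)) = true}

/-- The dual subshift, with transposed transition matrix (coordinates `(…, y₁, y₀)`). -/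
abbrev DualSp (r : ℕ) (M : Fin r → Fin r → Bool) :=
  {y : ℕ → Fin r // ∀ j, M (y (j + 1)) (y j) = true}

/-- The natural extension `Σ̂ ⊂ Σ* × Σ`: pairs `(y,x)` with `M (y₀, x₀) = 1`. -/
abbrev NatExt (r : ℕ) (M : Fin r → Fin r → Bool) :=
  {p : DualSp r M × SigSp r M // M (p.1.1 0) (p.2.1 0) = true}

/-- Prepend a symbol to a sequence. -/
def prepend (a : Fin r) (x : ℕ → Fin r) : ℕ → Fin r
  | 0 => a
  | m + 1 => x m

/-- The left shift `σ` on `Σ`. -/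
def shiftS (x : SigSp r M) : SigSp r M := ⟨fun n => x.1 (n + 1), fun j => x.2 (j + 1)⟩

/-- The projection `π₁(y,x) = x`. -/
def proj1 (p : NatExt r M) : SigSp r M := p.1.2

/-- `τ(y,x) = τ_y(x) = (y₀, x₀, x₁, …)`. -/
def tau (p : NatExt r M) : SigSp r M :=
  ⟨prepend (p.1.1.1 0) p.1.2.1, by
    intro j
    cases j with
    | zero => exact p.2
    | succ m => exact p.1.2.2 m⟩

/-- The two-sided shift `σ̂` on the natural extension. -/
def hatShift (p : NatExt r M) : NatExt r M :=
  ⟨(⟨prepend (p.1.2.1 0) p.1.1.1, by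
      intro j
      cases j with
      | zero => exact p.2
      | succ m => exact p.1.1.2 m⟩, shiftS p.1.2), p.1.2.2 0⟩

/-- Holonomic probability measures on `Σ̂`. -/
def Holonomic (μ : Measure (NatExt r M)) : Prop :=
  IsProbabilityMeasure μ ∧
    ∀ f : C(SigSp r M, ℝ), (∫ p, f (tau p) ∂μ) = ∫ p, f (proj1 p) ∂μ

/-- `β_A`, the maximal holonomic value of the potential `A`. -/
noncomputable def betaA (A : NatExt r M → ℝ) : ℝ :=
  ⨆ μ : {μ : Measure (NatExt r M) // Holonomic μ}, ∫ p, A p ∂(μ.1)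

open Classical in
/-- The metric `d(x, x̄) = λ^{min {j : x_j ≠ x̄_j}}` on `Σ`. -/
noncomputable def dS (lam : ℝ) (x x' : SigSp r M) : ℝ :=
  if h : x.1 = x'.1 then 0
  else lam ^ Nat.find (show ∃ j, x.1 j ≠ x'.1 j from Function.ne_iff.mp h)

open Classical in
/-- The analogous metric on `Σ*`. -/
noncomputable def dDual (lam : ℝ) (y y' : DualSp r M) : ℝ :=
  if h : y.1 = y'.1 then 0
  else lam ^ Nat.find (show ∃ j, y.1 j ≠ y'.1 j from Function.ne_iff.mp h)

/-- The metric on `Σ̂ ⊂ Σ* × Σ`. -/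
noncomputable def dHat (lam : ℝ) (p q : NatExt r M) : ℝ :=
  max (dDual lam p.1.1 q.1.1) (dS lam p.1.2 q.1.2)

/-- `u` is `θ`-Hölder on `Σ` with constant `C`. -/
def HolderOnSig (lam θ C : ℝ) (u : SigSp r M → ℝ) : Prop :=
  ∀ x x', |u x - u x'| ≤ C * (dS lam x x') ^ θ

/-- `A` is `θ`-Hölder on `Σ̂` with constant `C`. -/
def HolderOnExt (lam θ C : ℝ) (A : NatExt r M → ℝ) : Prop :=
  ∀ p q, |A p - A q| ≤ C * (dHat lam p q) ^ θ

/-- `(Σ,σ)` is (topologically) transitive. -/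
def TransitiveShift (r : ℕ) (M : Fin r → Fin r → Bool) : Prop :=
  ∀ U V : Set (SigSp r M), IsOpen U → IsOpen V → U.Nonempty → V.Nonempty →
    ∃ n : ℕ, (shiftS^[n] '' U ∩ V).Nonempty

/-- `(Σ,σ)` is topologically mixing. -/
def MixingShift (r : ℕ) (M : Fin r → Fin r → Bool) : Prop :=
  ∀ U V : Set (SigSp r M), IsOpen U → IsOpen V → U.Nonempty → V.Nonempty →
    ∃ K : ℕ, ∀ k > K, (shiftS^[k] '' U ∩ V).Nonempty

/-- A chain of length `k` starting at `x`: `x⁰ = x`, `x^{j+1} = τ_{yʲ}(xʲ)`. -/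
def IsChainFrom (x : SigSp r M) (k : ℕ) (p : ℕ → NatExt r M) : Prop :=
  (1 ≤ k → proj1 (p 0) = x) ∧ ∀ j, j + 1 < k → proj1 (p (j + 1)) = tau (p j)

/-- A path in `P(x, x̄, ε)`: begins at `x̄`, ends within `ε` of `x`. -/
def InPath (lam ε : ℝ) (x xbar : SigSp r M) (k : ℕ) (p : ℕ → NatExt r M) : Prop :=
  1 ≤ k ∧ proj1 (p 0) = xbar ∧ (∀ j, j + 1 < k → proj1 (p (j + 1)) = tau (p j)) ∧
    dS lam (tau (p (k - 1))) x < ε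

/-- `S_A^ε(x, x̄)`. -/
noncomputable def SAeps (lam : ℝ) (A : NatExt r M → ℝ) (ε : ℝ) (x xbar : SigSp r M) : EReal :=
  sInf {v : EReal | ∃ k p, InPath lam ε x xbar k p ∧
    v = ((- ∑ j ∈ Finset.range k, (A (p j) - betaA A) : ℝ) : EReal)}

/-- The Mañé potential `S_A(x, x̄) = lim_{ε→0} S_A^ε(x, x̄)`. -/
noncomputable def ManePot (lam : ℝ) (A : NatExt r M → ℝ) (x xbar : SigSp r M) : EReal :=
  ⨆ (ε : ℝ) (_ : 0 < ε), SAeps lam A ε x xbar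

/-- `x` is non-wandering with respect to `A`. -/
def NonWand (lam : ℝ) (A : NatExt r M → ℝ) (x : SigSp r M) : Prop :=
  ∀ ε > 0, ∃ k p, InPath lam ε x x k p ∧
    |∑ j ∈ Finset.range k, (A (p j) - betaA A)| < ε

/-- `x` is `u`-connected to `x̄`. -/
def UConnected (lam : ℝ) (A : NatExt r M → ℝ) (u : SigSp r M → ℝ)
    (x xbar : SigSp r M) : Prop :=
  ∀ ε > 0, ∃ k p, InPath lam ε x xbar k p ∧
    |∑ j ∈ Finset.range k, (A (p j) - betaA A) - (u x - u xbar)| < ε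

/-- A (continuous) sub-action for `A`. -/
def SubAction (A : NatExt r M → ℝ) (u : SigSp r M → ℝ) : Prop :=
  Continuous u ∧ ∀ p : NatExt r M, u (proj1 p) ≤ u (tau p) - A p + betaA A

/-- A calibrated sub-action for `A`:
`u(x) = min_{y ∈ Σ*_x} [u(τ_y(x)) − A(y,x) + β_A]`. -/
def Calibrated (A : NatExt r M → ℝ) (u : SigSp r M → ℝ) : Prop :=
  Continuous u ∧ ∀ x : SigSp r M,
    IsLeast {v : ℝ | ∃ p : NatExt r M, proj1 p = x ∧ v = u (tau p) - A p + betaA A} (u x)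

/-- The candidate maximal sub-action `u_A` (for `β_A = 0`). -/
noncomputable def uMax (A : NatExt r M → ℝ) (x : SigSp r M) : ℝ :=
  sInf {v : ℝ | ∃ k p, IsChainFrom x k p ∧ v = -∑ j ∈ Finset.range k, A (p j)}

/-- The operator `L_ρ(f)(x) = ρ · min_{y ∈ Σ*_x} [f(τ_y(x)) − A(y,x)]`. -/
noncomputable def Lrho (A : NatExt r M → ℝ) (rho : ℝ) (f : SigSp r M → ℝ)
    (x : SigSp r M) : ℝ :=
  rho * sInf {v : ℝ | ∃ p : NatExt r M, proj1 p = x ∧ v = f (tau p) - A p}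

end AubryMather

/-- The (topological) support of a measure. -/
def msupport {X : Type*} [TopologicalSpace X] [MeasurableSpace X]
    (μ : MeasureTheory.Measure X) : Set X :=
  {p | ∀ U : Set X, IsOpen U → p ∈ U → 0 < μ U}



section Helpers

variable {r : ℕ} {M : Fin r → Fin r → Bool}

lemma sigsp_compact : CompactSpace (SigSp r M) := by
  have hclosed : IsClosed {x : ℕ → Fin r | ∀ j, M (x j) (x (j + 1)) = true} := by
    have : {x : ℕ → Fin r | ∀ j, M (x j) (x (j + 1)) = true} =
        ⋂ j : ℕ, (fun x : ℕ → Fin r => (x j, x (j+1))) ⁻¹' {p : Fin r × Fin r | M p.1 p.2 = true} := by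
      ext x; simp [Set.mem_iInter]
    rw [this]
    refine isClosed_iInter fun j => IsClosed.preimage ?_ ?_
    · exact Continuous.prodMk (continuous_apply j) (continuous_apply (j+1))
    · exact isClosed_discrete _
  exact isCompact_iff_compactSpace.mp hclosed.isCompact

lemma dS_nonneg {lam : ℝ} (hlam : 0 ≤ lam) (x x' : SigSp r M) : 0 ≤ dS lam x x' := by
  unfold dS
  split
  · exact le_refl 0
  · exact pow_nonneg hlam _

lemma dS_le_pow_of_agree {lam : ℝ} (hlam0 : 0 ≤ lam) (hlam1 : lam ≤ 1)
    {x x' : SigSp r M} {n : ℕ} (h : ∀ i < n, x.1 i = x'.1 i) :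
    dS lam x x' ≤ lam ^ n := by
  unfold dS
  split
  · exact pow_nonneg hlam0 n
  · rename_i hne
    apply pow_le_pow_of_le_one hlam0 hlam1
    by_contra hlt
    push_neg at hlt
    exact Nat.find_spec (Function.ne_iff.mp hne) (h _ hlt)

lemma agree_of_dS_lt {lam : ℝ} (hlam0 : 0 < lam) (hlam1 : lam < 1)
    {x x' : SigSp r M} {n : ℕ} (h : dS lam x x' < lam ^ n) :
    ∀ i < n, x.1 i = x'.1 i := by
  intro i hi
  unfold dS at h
  split at h
  · rename_i he; rw [he]
  · rename_i hne
    have := (pow_lt_pow_iff_right_of_lt_one₀ hlam0 hlam1).mp h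
    by_contra hne'
    exact absurd (Nat.find_min (Function.ne_iff.mp hne) (lt_trans hi this) : ¬ _) (by simpa using hne')

/-- The cylinder around `x` of length `n` is a neighborhood. -/
lemma cylinder_mem_nhds (x : SigSp r M) (n : ℕ) :
    {w : SigSp r M | ∀ i < n, w.1 i = x.1 i} ∈ nhds x := by
  have : IsOpen {w : SigSp r M | ∀ i < n, w.1 i = x.1 i} := by
    have : {w : SigSp r M | ∀ i < n, w.1 i = x.1 i} =
        ⋂ i ∈ Finset.range n, (fun w : SigSp r M => w.1 i) ⁻¹' {x.1 i} := by
      ext w; simp [Set.mem_iInter]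
    rw [this]
    refine isOpen_biInter_finset fun i _ => IsOpen.preimage ?_ (isOpen_discrete _)
    exact (continuous_apply i).comp continuous_subtype_val
  exact this.mem_nhds (fun i _ => rfl)

/-- Every neighborhood contains a cylinder. -/
lemma exists_cylinder_subset {x : SigSp r M} {U : Set (SigSp r M)} (hU : U ∈ nhds x) :
    ∃ n : ℕ, ∀ w : SigSp r M, (∀ i < n, w.1 i = x.1 i) → w ∈ U := by
  rw [nhds_induced] at hU
  obtain ⟨V, hV, hVU⟩ := hU
  rw [nhds_pi, Filter.mem_pi] at hV
  obtain ⟨I, hIfin, t, ht, htV⟩ := hV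
  obtain ⟨F, hF⟩ := hIfin.exists_finset_coe
  classical
  refine ⟨(F.sup id) + 1, fun w hw => ?_⟩
  apply hVU
  apply htV
  intro i hi
  have hiF : i ∈ F := by rwa [← Finset.mem_coe, hF]
  have : i < F.sup id + 1 := Nat.lt_succ_of_le (Finset.le_sup (f := id) hiF)
  rw [hw i this]
  exact mem_of_mem_nhds (ht i)

lemma EReal.le_coe_of_forall_add {a : EReal} {c : ℝ}
    (h : ∀ δ : ℝ, 0 < δ → a ≤ ((c + δ : ℝ) : EReal)) : a ≤ (c : EReal) := by
  by_contra hc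
  push_neg at hc
  obtain ⟨y, hy1, hy2⟩ := EReal.lt_iff_exists_real_btwn.mp hc
  have hδ : (0:ℝ) < y - c := by have hcy : c < y := by exact_mod_cast hy1
                                linarith
  have := h (y - c) hδ
  rw [show c + (y - c) = y by ring] at this
  exact absurd (lt_of_le_of_lt this hy2) (lt_irrefl _)

lemma EReal.coe_le_coe_add_of_forall {a b : ℝ} {m : EReal}
    (h : ∀ δ : ℝ, 0 < δ → ((a - b - δ : ℝ) : EReal) ≤ m) : (a : EReal) ≤ (b : EReal) + m := by
  induction m using EReal.rec with
  | bot =>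
    exfalso
    have h1 := h 1 one_pos
    rw [le_bot_iff] at h1
    exact EReal.coe_ne_bot _ h1
  | coe t =>
    have hab : a - b ≤ t := by
      by_contra hc
      push_neg at hc
      have := h ((a - b - t)/2) (by linarith)
      rw [EReal.coe_le_coe_iff] at this
      linarith
    rw [← EReal.coe_add, EReal.coe_le_coe_iff]
    linarith
  | top =>
    rw [EReal.coe_add_top]
    exact le_top


end Helpers

set_option maxHeartbeats 1000000 in
/-- the representation formula
`u(x̄) = inf_{x ∈ Ω(A)} [u(x) + S_A(x, x̄)]` for calibrated sub-actions. -/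
theorem representation_formula
    {r : ℕ} {M : Fin r → Fin r → Bool}
    (lam θ C : ℝ) (hlam0 : 0 < lam) (hlam1 : lam < 1) (hθ : 0 < θ) (hC : 0 ≤ C)
    (A : NatExt r M → ℝ) (hA : HolderOnExt lam θ C A)
    (hΩ : ∃ x : SigSp r M, NonWand lam A x)
    (u : SigSp r M → ℝ) (hu : Calibrated A u)
    (xbar : SigSp r M) :
    ((u xbar : ℝ) : EReal) =
      ⨅ x : {x : SigSp r M // NonWand lam A x},
        (((u x.1 : ℝ) : EReal) + ManePot lam A x.1 xbar) := by
  classical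
  obtain ⟨hu_cont, hu_cal⟩ := hu
  have hstep : ∀ x : SigSp r M, ∃ p : NatExt r M, proj1 p = x ∧ u x = u (tau p) - A p + betaA A :=
    fun x => (hu_cal x).1
  choose step hstep1 hstep2 using hstep
  have hsub : ∀ q : NatExt r M, u (proj1 q) ≤ u (tau q) - A q + betaA A :=
    fun q => (hu_cal (proj1 q)).2 ⟨q, rfl, rfl⟩
  obtain ⟨X, hX0, hXs⟩ : ∃ X : ℕ → SigSp r M, X 0 = xbar ∧ ∀ n, X (n+1) = tau (step (X n)) :=
    ⟨fun n => Nat.rec xbar (fun _ xn => tau (step xn)) n, rfl, fun n => rfl⟩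
  have hproj : ∀ n, proj1 (step (X n)) = X n := fun n => hstep1 (X n)
  have tel : ∀ n k : ℕ, ∑ j ∈ Finset.range k, (A (step (X (n+j))) - betaA A)
      = u (X (n+k)) - u (X n) := by
    intro n k
    induction k with
    | zero => simp
    | succ k ih =>
      rw [Finset.sum_range_succ, ih]
      have h2 := hstep2 (X (n+k))
      rw [← hXs (n+k)] at h2
      have heq : u (X (n+(k+1))) = u (X ((n+k)+1)) := by norm_num [Nat.add_assoc]
      rw [heq]
      linarith
  haveI : CompactSpace (SigSp r M) := sigsp_compact
  haveI : Nonempty (SigSp r M) := ⟨xbar⟩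
  obtain ⟨z, hz⟩ := exists_clusterPt_of_compactSpace (Filter.map X Filter.atTop)
  have hfreq : ∀ U ∈ nhds z, ∀ n₀ : ℕ, ∃ n, n₀ ≤ n ∧ X n ∈ U := by
    intro U hU n₀
    have := (mapClusterPt_iff_frequently.mp hz) U hU
    exact Filter.frequently_atTop.mp this n₀
  -- Claim 3 : lower bound, valid for every x
  have claim3 : ∀ x : SigSp r M,
      ((u xbar : ℝ) : EReal) ≤ ((u x : ℝ) : EReal) + ManePot lam A x xbar := by
    intro x
    apply EReal.coe_le_coe_add_of_forall
    intro δ hδpos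
    have hball : u ⁻¹' Metric.ball (u x) δ ∈ nhds x :=
      hu_cont.continuousAt.preimage_mem_nhds (Metric.ball_mem_nhds _ hδpos)
    obtain ⟨nc, hnc⟩ := exists_cylinder_subset hball
    have hεpos : (0:ℝ) < lam ^ nc := pow_pos hlam0 nc
    have hS : ((u xbar - u x - δ : ℝ) : EReal) ≤ SAeps lam A (lam ^ nc) x xbar := by
      unfold SAeps
      apply le_sInf
      rintro v ⟨k, p, hpath, rfl⟩
      obtain ⟨hk1, hp0, hchain, hend⟩ := hpath
      have key : ∀ i, i < k →
          u xbar ≤ u (tau (p i)) - ∑ j ∈ Finset.range (i+1), (A (p j) - betaA A) := by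
        intro i
        induction i with
        | zero =>
          intro _
          have h0 := hsub (p 0)
          rw [hp0] at h0
          simp only [zero_add, Finset.sum_range_one]
          linarith
        | succ i ih =>
          intro hik
          have h1 := ih (by omega)
          have h2 := hsub (p (i+1))
          rw [hchain i hik] at h2
          rw [Finset.sum_range_succ]
          linarith
      have hk := key (k-1) (by omega)
      have hkk : k - 1 + 1 = k := by omega
      rw [hkk] at hk
      have hagree := agree_of_dS_lt hlam0 hlam1 hend
      have hmem : tau (p (k-1)) ∈ u ⁻¹' Metric.ball (u x) δ := hnc _ hagree
      rw [Set.mem_preimage, Metric.mem_ball, Real.dist_eq] at hmem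
      rw [EReal.coe_le_coe_iff]
      have habs := abs_lt.mp hmem
      linarith
    refine le_trans hS ?_
    unfold ManePot
    exact le_iSup₂ (f := fun ε (_ : 0 < ε) => SAeps lam A ε x xbar) (lam ^ nc) hεpos
  -- Claim 1 : ManePot z xbar ≤ u xbar - u z
  have claim1 : ManePot lam A z xbar ≤ ((u xbar - u z : ℝ) : EReal) := by
    unfold ManePot
    apply iSup₂_le
    intro ε hε
    apply EReal.le_coe_of_forall_add
    intro δ hδpos
    obtain ⟨nc, hnc⟩ := exists_pow_lt_of_lt_one hε hlam1
    have hU : ({w : SigSp r M | ∀ i < nc, w.1 i = z.1 i} ∩ u ⁻¹' Metric.ball (u z) δ) ∈ nhds z :=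
      Filter.inter_mem (cylinder_mem_nhds z nc)
        (hu_cont.continuousAt.preimage_mem_nhds (Metric.ball_mem_nhds _ hδpos))
    obtain ⟨m, hm1, hmU⟩ := hfreq _ hU 1
    have hpath : InPath lam ε z xbar m (fun n => step (X n)) := by
      refine ⟨hm1, by rw [hproj 0, hX0], fun j hj => by rw [hproj (j+1), hXs j], ?_⟩
      have htau : tau (step (X (m-1))) = X m := by
        rw [← hXs (m-1)]
        congr 1
        omega
      rw [htau]
      calc dS lam (X m) z ≤ lam ^ nc := dS_le_pow_of_agree hlam0.le hlam1.le hmU.1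
        _ < ε := hnc
    have hr : u xbar - u (X m) = - ∑ j ∈ Finset.range m, (A (step (X j)) - betaA A) := by
      have h0 := tel 0 m
      simp only [Nat.zero_add] at h0
      rw [hX0] at h0
      linarith
    have hS : SAeps lam A ε z xbar ≤ ((u xbar - u (X m) : ℝ) : EReal) := by
      unfold SAeps
      exact sInf_le ⟨m, fun n => step (X n), hpath, congrArg _ hr⟩
    refine le_trans hS ?_
    rw [EReal.coe_le_coe_iff]
    have hmb := hmU.2
    rw [Set.mem_preimage, Metric.mem_ball, Real.dist_eq] at hmb
    have habs := abs_lt.mp hmb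
    linarith
  -- Claim 2 : z is non-wandering
  have claim2 : NonWand lam A z := by
    intro ε hε
    have hρ0 : (0:ℝ) < lam ^ θ := Real.rpow_pos_of_pos hlam0 θ
    have hρ1 : lam ^ θ < 1 := Real.rpow_lt_one hlam0.le hlam1 hθ
    have hpow : ∀ nn : ℕ, (lam ^ nn : ℝ) ^ θ = (lam ^ θ) ^ nn := by
      intro nn
      rw [← Real.rpow_natCast lam nn, ← Real.rpow_mul hlam0.le, mul_comm,
        Real.rpow_mul hlam0.le, Real.rpow_natCast]
    obtain ⟨N1, hN1⟩ := exists_pow_lt_of_lt_one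
      (show (0:ℝ) < (ε/2) * (1-(lam ^ θ)) / (C+1) by
        apply div_pos (mul_pos (by linarith) (by linarith)) (by linarith)) hρ1
    obtain ⟨N2, hN2⟩ := exists_pow_lt_of_lt_one hε hlam1
    set N := max N1 N2 with hN
    have hρN : (lam ^ θ) ^ N < (ε/2) * (1-(lam ^ θ)) / (C+1) :=
      lt_of_le_of_lt (pow_le_pow_of_le_one hρ0.le hρ1.le (le_max_left _ _)) hN1
    have hlamN : lam ^ N < ε :=
      lt_of_le_of_lt (pow_le_pow_of_le_one hlam0.le hlam1.le (le_max_right _ _)) hN2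
    have hU : ({w : SigSp r M | ∀ i < N+1, w.1 i = z.1 i} ∩
        u ⁻¹' Metric.ball (u z) (ε/4)) ∈ nhds z :=
      Filter.inter_mem (cylinder_mem_nhds z (N+1))
        (hu_cont.continuousAt.preimage_mem_nhds (Metric.ball_mem_nhds _ (by linarith)))
    obtain ⟨n, -, hnU⟩ := hfreq _ hU 0
    obtain ⟨m, hmn, hmU⟩ := hfreq _ hU (n+1)
    set k := m - n with hkdef
    have hk1 : 1 ≤ k := by omega
    have hnk : n + k = m := by omega
    obtain ⟨W, hW0, hWs⟩ : ∃ W : ℕ → (ℕ → Fin r), W 0 = z.1 ∧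
        ∀ j, W (j+1) = prepend ((step (X (n+j))).1.1.1 0) (W j) :=
      ⟨fun j => Nat.rec z.1 (fun j Wj => prepend ((step (X (n+j))).1.1.1 0) Wj) j,
        rfl, fun j => rfl⟩
    have hXval : ∀ j, (step (X j)).1.2.1 = (X j).1 := fun j => congrArg Subtype.val (hproj j)
    have hXsval : ∀ j, (X (j+1)).1 = prepend ((step (X j)).1.1.1 0) (X j).1 := by
      intro j
      rw [hXs j]
      show prepend _ ((step (X j)).1.2.1) = _
      rw [hXval j]
    have hWinv : ∀ j, (∀ i, i < N+1+j → W j i = (X (n+j)).1 i) ∧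
        (∀ i, M (W j i) (W j (i+1)) = true) := by
      intro j
      induction j with
      | zero =>
        constructor
        · intro i hi
          rw [hW0]
          exact (hnU.1 i (by omega)).symm
        · rw [hW0]; exact z.2
      | succ j ih =>
        have hWj0 : W j 0 = (X (n+j)).1 0 := ih.1 0 (by omega)
        constructor
        · intro i hi
          show W (j+1) i = (X ((n+j)+1)).1 i
          rw [hWs j, hXsval (n+j)]
          match i with
          | 0 => rfl
          | (i+1) =>
            show W j i = (X (n+j)).1 i
            exact ih.1 i (by omega)
        · intro i
          rw [hWs j]
          match i with
          | 0 =>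
            show M ((step (X (n+j))).1.1.1 0) (W j 0) = true
            rw [hWj0, ← hXval (n+j)]
            exact (step (X (n+j))).2
          | (i+1) =>
            show M (W j i) (W j (i+1)) = true
            exact ih.2 i
    obtain ⟨Q, hQ1, hQ2⟩ : ∃ Q : ℕ → NatExt r M,
        (∀ j, (Q j).1.1 = (step (X (n+j))).1.1) ∧ (∀ j, (Q j).1.2.1 = W j) :=
      ⟨fun j => ⟨⟨(step (X (n+j))).1.1, ⟨W j, (hWinv j).2⟩⟩, by
          show M ((step (X (n+j))).1.1.1 0) (W j 0) = true
          rw [(hWinv j).1 0 (by omega), ← hXval (n+j)]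
          exact (step (X (n+j))).2⟩,
        fun j => rfl, fun j => rfl⟩
    have hQtau : ∀ j, (tau (Q j)).1 = W (j+1) := by
      intro j
      show prepend ((Q j).1.1.1 0) ((Q j).1.2.1) = W (j+1)
      rw [hQ1 j, hQ2 j, hWs j]
    refine ⟨k, Q, ⟨hk1, ?_, ?_, ?_⟩, ?_⟩
    · apply Subtype.ext
      show (Q 0).1.2.1 = z.1
      rw [hQ2 0, hW0]
    · intro j hj
      apply Subtype.ext
      show (Q (j+1)).1.2.1 = (tau (Q j)).1
      rw [hQ2 (j+1), hQtau j]
    · have htk : (tau (Q (k-1))).1 = W k := by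
        rw [hQtau (k-1), show k-1+1 = k from by omega]
      have hagree : ∀ i, i < N+1 → (tau (Q (k-1))).1 i = z.1 i := by
        intro i hi
        rw [htk, (hWinv k).1 i (by omega), hnk]
        exact hmU.1 i hi
      calc dS lam (tau (Q (k-1))) z
          ≤ lam ^ (N+1) := dS_le_pow_of_agree hlam0.le hlam1.le hagree
        _ ≤ lam ^ N := pow_le_pow_of_le_one hlam0.le hlam1.le (by omega)
        _ < ε := hlamN
    · -- action bound
      have hdiff : ∀ j, |A (Q j) - A (step (X (n+j)))| ≤ C * (lam ^ θ) ^ (N+1+j) := by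
        intro j
        have hd := hA (Q j) (step (X (n+j)))
        have hdS : dS lam (Q j).1.2 (step (X (n+j))).1.2 ≤ lam ^ (N+1+j) := by
          apply dS_le_pow_of_agree hlam0.le hlam1.le
          intro i hi
          show (Q j).1.2.1 i = (step (X (n+j))).1.2.1 i
          rw [hQ2 j, hXval (n+j)]
          exact (hWinv j).1 i hi
        have hdDual : dDual lam (Q j).1.1 (step (X (n+j))).1.1 = 0 := by
          rw [hQ1 j]
          unfold dDual
          rw [dif_pos rfl]
        have hdHat : dHat lam (Q j) (step (X (n+j))) ≤ lam ^ (N+1+j) := by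
          unfold dHat
          rw [hdDual]
          exact max_le (pow_nonneg hlam0.le _) hdS
        have hdHat0 : 0 ≤ dHat lam (Q j) (step (X (n+j))) := by
          unfold dHat
          rw [hdDual]
          exact le_max_left _ _
        calc |A (Q j) - A (step (X (n+j)))|
            ≤ C * (dHat lam (Q j) (step (X (n+j)))) ^ θ := hd
          _ ≤ C * (lam ^ (N+1+j)) ^ θ :=
              mul_le_mul_of_nonneg_left (Real.rpow_le_rpow hdHat0 hdHat hθ.le) hC
          _ = C * (lam ^ θ) ^ (N+1+j) := by rw [hpow]
      have hsum1 : ∑ j ∈ Finset.range k, (A (step (X (n+j))) - betaA A)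
          = u (X m) - u (X n) := by
        rw [tel n k, hnk]
      have hsplit : ∑ j ∈ Finset.range k, (A (Q j) - betaA A)
          = (u (X m) - u (X n)) + ∑ j ∈ Finset.range k, (A (Q j) - A (step (X (n+j)))) := by
        rw [← hsum1, ← Finset.sum_add_distrib]
        apply Finset.sum_congr rfl
        intro j _
        ring
      have hgs := geom_sum_mul (lam ^ θ) k
      have hgeom : ∑ j ∈ Finset.range k, (lam ^ θ) ^ j ≤ 1/(1-(lam ^ θ)) := by
        rw [le_div_iff₀ (by linarith : (0:ℝ) < 1 - lam ^ θ)]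
        nlinarith [pow_nonneg hρ0.le k]
      have hsum2 : |∑ j ∈ Finset.range k, (A (Q j) - A (step (X (n+j))))| < ε/2 := by
        have hb1 : |∑ j ∈ Finset.range k, (A (Q j) - A (step (X (n+j))))|
            ≤ C * (lam ^ θ) ^ (N+1) * ∑ j ∈ Finset.range k, (lam ^ θ) ^ j := by
          calc |∑ j ∈ Finset.range k, (A (Q j) - A (step (X (n+j))))|
              ≤ ∑ j ∈ Finset.range k, |A (Q j) - A (step (X (n+j)))| :=
                Finset.abs_sum_le_sum_abs _ _
            _ ≤ ∑ j ∈ Finset.range k, C * (lam ^ θ) ^ (N+1+j) :=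
                Finset.sum_le_sum (fun j _ => hdiff j)
            _ = C * (lam ^ θ) ^ (N+1) * ∑ j ∈ Finset.range k, (lam ^ θ) ^ j := by
                rw [Finset.mul_sum]
                apply Finset.sum_congr rfl
                intro j _
                rw [pow_add]
                ring
        have hsumpos : (0:ℝ) ≤ ∑ j ∈ Finset.range k, (lam ^ θ) ^ j :=
          Finset.sum_nonneg (fun j _ => pow_nonneg hρ0.le j)
        have hb2 : C * (lam ^ θ) ^ (N+1) * ∑ j ∈ Finset.range k, (lam ^ θ) ^ j
            ≤ C * (lam ^ θ) ^ (N+1) * (1/(1-(lam ^ θ))) := by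
          apply mul_le_mul_of_nonneg_left hgeom
          positivity
        have hb3 : C * (lam ^ θ) ^ (N+1) * (1/(1-(lam ^ θ))) < ε/2 := by
          rw [mul_one_div, div_lt_iff₀ (by linarith : (0:ℝ) < 1 - lam ^ θ)]
          have hpp : (lam ^ θ) ^ (N+1) ≤ (lam ^ θ) ^ N :=
            pow_le_pow_of_le_one hρ0.le hρ1.le (by omega)
          have hρN' : (lam ^ θ) ^ N * (C+1) < ε/2 * (1-(lam ^ θ)) := by
            have := (lt_div_iff₀ (by linarith : (0:ℝ) < C+1)).mp hρN
            linarith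
          nlinarith [pow_nonneg hρ0.le N, pow_nonneg hρ0.le (N+1)]
        linarith
      have hn2 := hnU.2
      have hm2 := hmU.2
      rw [Set.mem_preimage, Metric.mem_ball, Real.dist_eq] at hn2 hm2
      have hab1 := abs_lt.mp hn2
      have hab2 := abs_lt.mp hm2
      have habs3 := abs_lt.mp hsum2
      rw [hsplit]
      rw [abs_lt]
      constructor <;> linarith
  -- conclusion
  apply le_antisymm
  · exact le_iInf fun x => claim3 x.1
  · refine le_trans (iInf_le _ ⟨z, claim2⟩) ?_
    refine le_trans (add_le_add_right claim1 _) ?_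
    rw [← EReal.coe_add]
    norm_num
end

section
/- If μ̂ is an A-maximizing holonomic probability such that μ̂∘π₁⁻¹ is ergodic, and u, u′ are continuous sub-actions for A, then u − u′ is constant on π₁(supp μ̂). -/
open MeasureTheory

section AuxProof

open MeasureTheory TopologicalSpace

variable {r : ℕ} {M : Fin r → Fin r → Bool}

lemma aux_isClosed_sigSet :
    IsClosed {x : ℕ → Fin r | ∀ j, M (x j) (x (j + 1)) = true} := by
  have h : ∀ j : ℕ, IsClosed {x : ℕ → Fin r | M (x j) (x (j + 1)) = true} := by
    intro j
    have hc : Continuous fun x : ℕ → Fin r => M (x j) (x (j + 1)) := by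
      have h1 : Continuous fun x : ℕ → Fin r => (x j, x (j + 1)) :=
        (continuous_apply j).prodMk (continuous_apply (j + 1))
      exact (continuous_of_discreteTopology
        (f := fun q : Fin r × Fin r => M q.1 q.2)).comp h1
    exact (isClosed_singleton (x := true)).preimage hc
  have e : {x : ℕ → Fin r | ∀ j, M (x j) (x (j + 1)) = true}
      = ⋂ j, {x : ℕ → Fin r | M (x j) (x (j + 1)) = true} := by
    ext x; simp
  rw [e]; exact isClosed_iInter h

lemma aux_isClosed_dualSet :
    IsClosed {y : ℕ → Fin r | ∀ j, M (y (j + 1)) (y j) = true} := by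
  have h : ∀ j : ℕ, IsClosed {y : ℕ → Fin r | M (y (j + 1)) (y j) = true} := by
    intro j
    have hc : Continuous fun y : ℕ → Fin r => M (y (j + 1)) (y j) := by
      have h1 : Continuous fun y : ℕ → Fin r => (y (j + 1), y j) :=
        (continuous_apply (j + 1)).prodMk (continuous_apply j)
      exact (continuous_of_discreteTopology
        (f := fun q : Fin r × Fin r => M q.1 q.2)).comp h1
    exact (isClosed_singleton (x := true)).preimage hc
  have e : {y : ℕ → Fin r | ∀ j, M (y (j + 1)) (y j) = true}
      = ⋂ j, {y : ℕ → Fin r | M (y (j + 1)) (y j) = true} := by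
    ext y; simp
  rw [e]; exact isClosed_iInter h

instance : CompactSpace (SigSp r M) :=
  isCompact_iff_compactSpace.mp aux_isClosed_sigSet.isCompact

instance : CompactSpace (DualSp r M) :=
  isCompact_iff_compactSpace.mp aux_isClosed_dualSet.isCompact

lemma aux_isClosed_extSet :
    IsClosed {p : DualSp r M × SigSp r M | M (p.1.1 0) (p.2.1 0) = true} := by
  have hc : Continuous fun p : DualSp r M × SigSp r M => M (p.1.1 0) (p.2.1 0) := by
    have h1 : Continuous fun p : DualSp r M × SigSp r M => (p.1.1 0, p.2.1 0) :=
      (((continuous_apply 0).comp (continuous_subtype_val.comp continuous_fst)).prodMk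
        ((continuous_apply 0).comp (continuous_subtype_val.comp continuous_snd)))
    exact (continuous_of_discreteTopology
      (f := fun q : Fin r × Fin r => M q.1 q.2)).comp h1
  exact (isClosed_singleton (x := true)).preimage hc

instance : CompactSpace (NatExt r M) :=
  isCompact_iff_compactSpace.mp aux_isClosed_extSet.isCompact

instance : SecondCountableTopology (SigSp r M) :=
  inferInstanceAs (SecondCountableTopology {x : ℕ → Fin r | ∀ j, M (x j) (x (j + 1)) = true})

instance : SecondCountableTopology (DualSp r M) :=
  inferInstanceAs (SecondCountableTopology {y : ℕ → Fin r | ∀ j, M (y (j + 1)) (y j) = true})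

instance : SecondCountableTopology (NatExt r M) :=
  inferInstanceAs (SecondCountableTopology
    {p : DualSp r M × SigSp r M | M (p.1.1 0) (p.2.1 0) = true})

instance : BorelSpace (SigSp r M) :=
  inferInstanceAs (BorelSpace {x : ℕ → Fin r | ∀ j, M (x j) (x (j + 1)) = true})

instance : BorelSpace (DualSp r M) :=
  inferInstanceAs (BorelSpace {y : ℕ → Fin r | ∀ j, M (y (j + 1)) (y j) = true})

instance : BorelSpace (NatExt r M) :=
  inferInstanceAs (BorelSpace {p : DualSp r M × SigSp r M | M (p.1.1 0) (p.2.1 0) = true})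

instance : PseudoMetrizableSpace (SigSp r M) :=
  inferInstanceAs (PseudoMetrizableSpace
    {x : ℕ → Fin r | ∀ j, M (x j) (x (j + 1)) = true})

lemma aux_continuous_proj1 : Continuous (proj1 : NatExt r M → SigSp r M) :=
  continuous_snd.comp continuous_subtype_val

lemma aux_continuous_tau : Continuous (tau : NatExt r M → SigSp r M) := by
  apply Continuous.subtype_mk
  apply continuous_pi
  intro n
  cases n with
  | zero =>
      exact (continuous_apply 0).comp
        (continuous_subtype_val.comp (continuous_fst.comp continuous_subtype_val))
  | succ m =>
      exact (continuous_apply m).comp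
        (continuous_subtype_val.comp (continuous_snd.comp continuous_subtype_val))

lemma aux_continuous_shiftS : Continuous (shiftS : SigSp r M → SigSp r M) := by
  unfold shiftS
  apply Continuous.subtype_mk
  apply continuous_pi
  intro n
  exact (continuous_apply (n + 1)).comp continuous_subtype_val

lemma aux_shift_tau (p : NatExt r M) : shiftS (tau p) = proj1 p :=
  Subtype.ext (funext fun _ => rfl)

lemma aux_msupport_compl_null {X : Type*} [TopologicalSpace X] [MeasurableSpace X]
    [SecondCountableTopology X] (μ : Measure X) : μ (msupport μ)ᶜ = 0 := by
  have hsub : (msupport μ)ᶜ ⊆ ⋃₀ {V ∈ countableBasis X | μ V = 0} := by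
    intro p hp
    simp only [msupport, Set.mem_compl_iff, Set.mem_setOf_eq, not_forall] at hp
    obtain ⟨U, hUo, hpU, hμU⟩ := hp
    have hμU0 : μ U = 0 := le_antisymm (not_lt.mp hμU) zero_le
    obtain ⟨V, hVB, hpV, hVU⟩ :=
      (isBasis_countableBasis X).exists_subset_of_mem_open hpU hUo
    exact ⟨V, ⟨hVB, measure_mono_null hVU hμU0⟩, hpV⟩
  refine measure_mono_null hsub ?_
  refine (measure_sUnion_null_iff ?_).2 fun s hs => hs.2
  exact (countable_countableBasis X).mono fun V hV => hV.1

lemma aux_eq_zero_on_msupport {X : Type*} [TopologicalSpace X] [MeasurableSpace X]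
    (μ : Measure X) {g : X → ℝ} (hg : Continuous g) (h0 : μ {x | g x ≠ 0} = 0) :
    ∀ p ∈ msupport μ, g p = 0 := by
  intro p hp
  by_contra h
  have hopen : IsOpen {x | g x ≠ 0} := isOpen_compl_singleton.preimage hg
  have := hp _ hopen h
  simp [h0] at this

lemma aux_integrable_of_continuous {Y : Type*} [TopologicalSpace Y] [MeasurableSpace Y]
    [OpensMeasurableSpace Y] [T2Space Y] [CompactSpace Y]
    (ν : Measure Y) [IsFiniteMeasure ν] {g : Y → ℝ} (hg : Continuous g) :
    Integrable g ν :=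
  hg.integrable_of_hasCompactSupport (isClosed_tsupport g).isCompact

end AuxProof

/-- if `μ̂` is an `A`-maximizing holonomic probability whose projection is
ergodic, then the difference of any two continuous sub-actions is constant on
`π₁(supp μ̂)`. -/
theorem subaction_difference_constant
    {r : ℕ} {M : Fin r → Fin r → Bool}
    (A : NatExt r M → ℝ) (hA : Continuous A)
    (μ : Measure (NatExt r M)) (hμ : Holonomic μ)
    (hmax : (∫ p, A p ∂μ) = betaA A)
    (herg : Ergodic shiftS (μ.map proj1))
    (u u' : SigSp r M → ℝ) (hu : SubAction A u) (hu' : SubAction A u') :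
    ∃ c : ℝ, ∀ x ∈ proj1 '' msupport μ, u x - u' x = c := by
  classical
  have hP : IsProbabilityMeasure μ := hμ.1
  have hproj1m : Measurable (proj1 : NatExt r M → SigSp r M) :=
    aux_continuous_proj1.measurable
  have htaum : Measurable (tau : NatExt r M → SigSp r M) :=
    aux_continuous_tau.measurable
  have hshiftm : Measurable (shiftS : SigSp r M → SigSp r M) :=
    aux_continuous_shiftS.measurable
  set ν : Measure (SigSp r M) := μ.map proj1 with hν
  have hνP : IsProbabilityMeasure ν := Measure.isProbabilityMeasure_map hproj1m.aemeasurable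
  -- contact locus equalities
  have contact : ∀ (w : SigSp r M → ℝ), SubAction A w →
      ∀ p ∈ msupport μ, w (tau p) - A p + betaA A - w (proj1 p) = 0 := by
    intro w hw
    set F : NatExt r M → ℝ := fun p => w (tau p) - A p + betaA A - w (proj1 p) with hF
    have hFc : Continuous F := by
      exact (((hw.1.comp aux_continuous_tau).sub hA).add continuous_const).sub
        (hw.1.comp aux_continuous_proj1)
    have hFnn : 0 ≤ F := fun p => by
      have := hw.2 p
      show (0 : ℝ) ≤ w (tau p) - A p + betaA A - w (proj1 p)
      linarith
    have hFi : Integrable F μ := aux_integrable_of_continuous μ hFc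
    have h1 : Integrable (fun p => w (tau p)) μ :=
      aux_integrable_of_continuous μ (hw.1.comp aux_continuous_tau)
    have h2 : Integrable A μ := aux_integrable_of_continuous μ hA
    have h3 : Integrable (fun p => w (proj1 p)) μ :=
      aux_integrable_of_continuous μ (hw.1.comp aux_continuous_proj1)
    have hwint : (∫ p, w (tau p) ∂μ) = ∫ p, w (proj1 p) ∂μ := hμ.2 ⟨w, hw.1⟩
    have hFint : (∫ p, F p ∂μ) = 0 := by
      have h12 : Integrable (fun p => w (tau p) - A p) μ := h1.sub h2
      have h12b : Integrable (fun p => w (tau p) - A p + betaA A) μ :=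
        h12.add (integrable_const _)
      have : (∫ p, F p ∂μ)
          = ((∫ p, w (tau p) ∂μ) - (∫ p, A p ∂μ) + betaA A) - ∫ p, w (proj1 p) ∂μ := by
        simp only [hF]
        rw [integral_sub h12b h3, integral_add h12 (integrable_const _),
          integral_sub h1 h2, integral_const]
        simp [measure_univ]
      rw [this, hwint, hmax]
      ring
    have hae : F =ᵐ[μ] 0 := (integral_eq_zero_iff_of_nonneg hFnn hFi).mp hFint
    have h0 : μ {p | F p ≠ 0} = 0 := by
      simpa [Filter.EventuallyEq, ae_iff] using hae
    exact aux_eq_zero_on_msupport μ hFc h0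
  have contact_u := contact u hu
  have contact_u' := contact u' hu'
  -- the set K = tau '' msupport μ
  set K : Set (SigSp r M) := tau '' msupport μ with hK
  have hsuppclosed : IsClosed (msupport μ) := by
    rw [← isOpen_compl_iff, isOpen_iff_forall_mem_open]
    intro p hp
    simp only [msupport, Set.mem_compl_iff, Set.mem_setOf_eq, not_forall] at hp
    obtain ⟨U, hUo, hpU, hμU⟩ := hp
    refine ⟨U, fun q hq => ?_, hUo, hpU⟩
    simp only [msupport, Set.mem_compl_iff, Set.mem_setOf_eq, not_forall]
    exact ⟨U, hUo, hq, hμU⟩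
  have hKclosed : IsClosed K :=
    (hsuppclosed.isCompact.image aux_continuous_tau).isClosed
  -- ν K = (μ.map tau) K
  have hmaps : ν K = (μ.map tau) K := by
    apply measure_isClosed_eq_of_forall_lintegral_eq_of_isFiniteMeasure _ hKclosed
    intro f
    have hfm := f.measurable_coe_ennreal_comp
    rw [lintegral_map hfm hproj1m, lintegral_map hfm htaum]
    have h1 : Integrable (fun p => ((f (proj1 p) : ℝ))) μ :=
      aux_integrable_of_continuous μ
        ((NNReal.continuous_coe.comp f.continuous).comp aux_continuous_proj1)
    have h2 : Integrable (fun p => ((f (tau p) : ℝ))) μ :=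
      aux_integrable_of_continuous μ
        ((NNReal.continuous_coe.comp f.continuous).comp aux_continuous_tau)
    have key : (∫ p, ((f (tau p) : ℝ)) ∂μ) = ∫ p, ((f (proj1 p) : ℝ)) ∂μ :=
      hμ.2 ⟨fun x => (f x : ℝ), NNReal.continuous_coe.comp f.continuous⟩
    rw [lintegral_coe_eq_integral _ h1, lintegral_coe_eq_integral _ h2, key]
  -- ν-a.e. x lies in K
  have htauK : (μ.map tau) Kᶜ = 0 := by
    rw [Measure.map_apply htaum hKclosed.measurableSet.compl]
    refine measure_mono_null (fun p hp => ?_) (aux_msupport_compl_null μ)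
    intro hps
    exact hp ⟨p, hps, rfl⟩
  have hνK : ν Kᶜ = 0 := by
    have hmap : IsProbabilityMeasure (μ.map tau) :=
      Measure.isProbabilityMeasure_map htaum.aemeasurable
    have h1 : (μ.map tau) K = 1 :=
      (prob_compl_eq_zero_iff hKclosed.measurableSet).mp htauK
    have h2 : ν K = 1 := by rw [hmaps, h1]
    exact (prob_compl_eq_zero_iff hKclosed.measurableSet).mpr h2
  -- the difference v is a.e. shift invariant
  set v : SigSp r M → ℝ := fun x => u x - u' x with hv
  have hvc : Continuous v := (hu.1).sub (hu'.1)
  have hinv : v ∘ shiftS =ᵐ[ν] v := by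
    have hKae : ∀ᵐ x ∂ν, x ∈ K := by
      rw [ae_iff]
      exact hνK
    filter_upwards [hKae] with x hx
    obtain ⟨q, hq, rfl⟩ := hx
    have h1 := contact_u q hq
    have h2 := contact_u' q hq
    simp only [Function.comp_apply, aux_shift_tau, hv]
    linarith
  obtain ⟨c, hc⟩ := herg.ae_eq_const_of_ae_eq_comp₀
    (hvc.measurable.nullMeasurable) hinv
  refine ⟨c, ?_⟩
  rintro x ⟨p, hp, rfl⟩
  -- v = c on the support of ν
  have h0 : ν {x | v x - c ≠ 0} = 0 := by
    have : ∀ᵐ x ∂ν, v x - c = 0 := by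
      filter_upwards [hc] with x hx
      simp [hx]
    simpa [ae_iff] using this
  have hmem : proj1 p ∈ msupport ν := by
    intro U hU hxU
    have : 0 < μ (proj1 ⁻¹' U) :=
      hp _ (hU.preimage aux_continuous_proj1) hxU
    rwa [hν, Measure.map_apply hproj1m hU.measurableSet]
  have := aux_eq_zero_on_msupport ν ((hvc.sub continuous_const)) h0 _ hmem
  have : v (proj1 p) = c := by simp only [Pi.sub_apply] at this; linarith
  simpa [hv] using this
end
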